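/- Let K be a field, k ≥ 1 an integer, x_1, …, x_{k+1} pairwise distinct elements of K, u, v ∈ K, and c_1, …, c_{k−1} ∈ K, with 1 − v x_j ≠ 0 for all 1 ≤ j ≤ k+1. Then the k-th iterated divided difference of the function b ↦ (1 − u b)/(1 − v b) · ∏_{i=1}^{k−1}(1 − b c_i) at the points x_1, …, x_{k+1} satisfies: Σ_{j=1}^{k+1} [ (1 − u x_j)/(1 − v x_j) · ∏_{i=1}^{k−1}(1 − x_j c_i) ] / ∏_{l ≠ j}(x_j − x_l) = (v − u) · ∏_{i=1}^{k−1}(v − c_i) / ∏_{j=1}^{k+1}(1 − v x_j). -/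

import Mathlib

open Polynomial Finset

lemma coeff_interpolate_aux {F : Type*} [Field F] (s : Finset ℕ) (x : ℕ → F)
    (r : ℕ → F) :
    (Lagrange.interpolate s x r).coeff (s.card - 1) =
      ∑ j ∈ s, r j / ∏ l ∈ s.erase j, (x j - x l) := by
  rw [Lagrange.interpolate_apply, Polynomial.finset_sum_coeff]
  refine Finset.sum_congr rfl fun j hj => ?_
  rw [Polynomial.coeff_C_mul]
  have hb : Lagrange.basis s x j =
      C (∏ l ∈ s.erase j, (x j - x l)⁻¹) * ∏ l ∈ s.erase j, (X - C (x l)) := by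
    rw [Lagrange.basis, map_prod, ← Finset.prod_mul_distrib]
    rfl
  have hm : (∏ l ∈ s.erase j, (X - C (x l))).Monic :=
    monic_prod_of_monic _ _ fun l _ => monic_X_sub_C _
  have hd : (∏ l ∈ s.erase j, (X - C (x l))).natDegree = s.card - 1 := by
    rw [natDegree_prod_of_monic _ _ fun l _ => monic_X_sub_C _]
    simp [Finset.card_erase_of_mem hj]
  rw [hb, Polynomial.coeff_C_mul, ← hd, hm.coeff_natDegree, mul_one,
    div_eq_mul_inv, ← Finset.prod_inv_distrib]

lemma sum_div_prod_eq_coeff_aux {F : Type*} [Field F] (s : Finset ℕ) (x : ℕ → F)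
    (hx : Set.InjOn x s) (P : F[X]) (hP : P.degree < s.card) :
    ∑ j ∈ s, P.eval (x j) / ∏ l ∈ s.erase j, (x j - x l) = P.coeff (s.card - 1) := by
  rw [← coeff_interpolate_aux s x (fun j => P.eval (x j)), ← Lagrange.eq_interpolate hx hP]

lemma sum_inv_prod_eq_zero_aux {F : Type*} [Field F] (s : Finset ℕ) (x : ℕ → F)
    (hx : Set.InjOn x s) (hs : 2 ≤ s.card) :
    ∑ j ∈ s, (∏ l ∈ s.erase j, (x j - x l))⁻¹ = 0 := by
  have := sum_div_prod_eq_coeff_aux s x hx 1 (by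
    rw [Polynomial.degree_one]
    exact_mod_cast Nat.pos_of_ne_zero (by omega))
  simp only [Polynomial.eval_one, one_div] at this
  rw [this, Polynomial.coeff_one]
  have : s.card - 1 ≠ 0 := by omega
  simp [this]

lemma sum_inv_one_sub_mul_aux {F : Type*} [Field F] (v : F) (s : Finset ℕ) (hne : s.Nonempty) :
    ∀ x : ℕ → F, Set.InjOn x s → (∀ j ∈ s, 1 - v * x j ≠ 0) →
    ∑ j ∈ s, ((1 - v * x j) * ∏ l ∈ s.erase j, (x j - x l))⁻¹ =
      v ^ (s.card - 1) / ∏ j ∈ s, (1 - v * x j) := by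
  induction hne using Finset.Nonempty.cons_induction with
  | singleton a => intro x _ hv; simp
  | cons a t ha ht ih =>
    intro x hinj hv
    have hja : ∀ j ∈ t, j ≠ a := fun j hj h => ha (h ▸ hj)
    have hxa : ∀ j ∈ t, x j - x a ≠ 0 := fun j hj =>
      sub_ne_zero.mpr fun h => hja j hj (hinj (by simp [hj]) (by simp) h)
    have hva : 1 - v * x a ≠ 0 := hv a (by simp)
    have hinj' : Set.InjOn x t := hinj.mono (by simp [Finset.subset_iff])
    have hP : ∀ j ∈ t, ∏ l ∈ t.erase j, (x j - x l) ≠ 0 := fun j hj =>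
      Finset.prod_ne_zero_iff.mpr fun l hl => sub_ne_zero.mpr fun h =>
        (Finset.mem_erase.mp hl).1.symm (hinj' hj (Finset.mem_of_mem_erase hl) h)
    have herase : ∀ j ∈ t, (Finset.cons a t ha).erase j
        = Finset.cons a (t.erase j) (by simp [ha]) := fun j hj => by
      rw [Finset.erase_cons_of_ne _ (hja j hj).symm]
    have step : ∀ j ∈ t, ((1 - v * x j) * ∏ l ∈ (Finset.cons a t ha).erase j, (x j - x l))⁻¹ =
        v / (1 - v * x a) * ((1 - v * x j) * ∏ l ∈ t.erase j, (x j - x l))⁻¹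
        + (1 - v * x a)⁻¹ * ((x j - x a) * ∏ l ∈ t.erase j, (x j - x l))⁻¹ := by
      intro j hj
      rw [herase j hj, Finset.prod_cons]
      have h1 := hv j (by simp [hj])
      have h2 := hxa j hj
      have h3 := hP j hj
      field_simp
      ring
    rw [Finset.sum_cons, Finset.sum_congr rfl step, Finset.sum_add_distrib,
      ← Finset.mul_sum, ← Finset.mul_sum, ih x hinj' (fun j hj => hv j (by simp [hj]))]
    have key : (∏ l ∈ t, (x a - x l))⁻¹
        + ∑ j ∈ t, ((x j - x a) * ∏ l ∈ t.erase j, (x j - x l))⁻¹ = 0 := by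
      have key0 := sum_inv_prod_eq_zero_aux (Finset.cons a t ha) x hinj
        (by rw [Finset.card_cons]; have := ht.card_pos; omega)
      rw [Finset.sum_cons, Finset.erase_cons,
        Finset.sum_congr rfl (fun j hj => by rw [herase j hj, Finset.prod_cons])] at key0
      exact key0
    have hzero : ((1 - v * x a) * ∏ l ∈ Finset.erase (Finset.cons a t ha) a, (x a - x l))⁻¹
        + (1 - v * x a)⁻¹ * ∑ j ∈ t, ((x j - x a) * ∏ l ∈ t.erase j, (x j - x l))⁻¹ = 0 := by
      rw [Finset.erase_cons, mul_inv, mul_comm ((1 - v * x a)⁻¹), mul_comm ((1 - v * x a)⁻¹),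
        ← add_mul] at *
      rw [key, zero_mul]
    have hm : v ^ (#(Finset.cons a t ha) - 1) = v * v ^ (#t - 1) := by
      rw [Finset.card_cons, Nat.add_sub_cancel, ← pow_succ', Nat.sub_add_cancel ht.card_pos]
    rw [Finset.erase_cons] at hzero
    rw [Finset.erase_cons, Finset.prod_cons, hm, div_eq_mul_inv, mul_inv]
    simp only [div_eq_mul_inv, mul_inv] at hzero ⊢
    linear_combination hzero

lemma natDegree_prod_one_sub_le_aux {F : Type*} [Field F] (t : Finset ℕ) (d : ℕ → F) :
    (∏ i ∈ t, (1 - C (d i) * X)).natDegree ≤ t.card := by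
  refine le_trans (Polynomial.natDegree_prod_le _ _) ?_
  calc ∑ i ∈ t, (1 - C (d i) * X).natDegree ≤ ∑ i ∈ t, 1 := by
        refine Finset.sum_le_sum fun i _ => ?_
        refine le_trans (Polynomial.natDegree_sub_le _ _) ?_
        simp only [Polynomial.natDegree_one, max_le_iff, Nat.zero_le, true_and]
        exact (Polynomial.natDegree_C_mul_le _ _).trans (by simp)
    _ = t.card := by simp

lemma coeff_prod_one_sub_aux {F : Type*} [Field F] (t : Finset ℕ) (d : ℕ → F) :
    (∏ i ∈ t, (1 - C (d i) * X)).coeff t.card = ∏ i ∈ t, (-(d i)) := by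
  induction t using Finset.induction with
  | empty => simp
  | @insert a t ha ih =>
    rw [Finset.prod_insert ha, Finset.prod_insert ha, Finset.card_insert_of_notMem ha]
    have hQ : (∏ i ∈ t, (1 - C (d i) * X)).coeff (t.card + 1) = 0 :=
      Polynomial.coeff_eq_zero_of_natDegree_lt
        (lt_of_le_of_lt (natDegree_prod_one_sub_le_aux t d) (by omega))
    rw [sub_mul, one_mul, Polynomial.coeff_sub, hQ, mul_assoc, Polynomial.coeff_C_mul,
      Polynomial.coeff_X_mul, ih]
    ring

/-- **Key lemma for the bibasic summation formula (Lemma (Main)).**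
Let `K` be a field, `k ≥ 1` an integer, `x 1, …, x (k+1)` pairwise distinct elements
of `K`, `u, v ∈ K` and `c 1, …, c (k-1) ∈ K`, with `1 - v * x j ≠ 0` for all
`1 ≤ j ≤ k+1`.  Then the `k`-th iterated divided difference of
`b ↦ (1 - u b)/(1 - v b) * ∏_{i=1}^{k-1} (1 - b c i)` at `x 1, …, x (k+1)` equals
`(v - u) * ∏_{i=1}^{k-1} (v - c i) / ∏_{j=1}^{k+1} (1 - v x j)`. -/
theorem divided_difference_bibasic_lemma {K : Type*} [Field K] (k : ℕ) (hk : 1 ≤ k)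
    (x c : ℕ → K) (u v : K)
    (hx : ∀ j ∈ Finset.Icc 1 (k + 1), ∀ l ∈ Finset.Icc 1 (k + 1), j ≠ l → x j ≠ x l)
    (hv : ∀ j ∈ Finset.Icc 1 (k + 1), 1 - v * x j ≠ 0) :
    ∑ j ∈ Finset.Icc 1 (k + 1),
        ((1 - u * x j) / (1 - v * x j) * ∏ i ∈ Finset.Icc 1 (k - 1), (1 - x j * c i)) /
          ∏ l ∈ (Finset.Icc 1 (k + 1)).erase j, (x j - x l)
      = (v - u) * (∏ i ∈ Finset.Icc 1 (k - 1), (v - c i)) /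
          ∏ j ∈ Finset.Icc 1 (k + 1), (1 - v * x j) := by
  set s : Finset ℕ := Finset.Icc 1 (k + 1) with hs
  have hcard : s.card = k + 1 := by simp [hs]
  have hcard' : (Finset.Icc 1 (k - 1)).card = k - 1 := by simp
  have hinj : Set.InjOn x s := fun a haa b hb hab => by
    by_contra h
    exact hx a haa b hb h hab
  set N : K[X] := (1 - C u * X) * ∏ i ∈ Finset.Icc 1 (k - 1), (1 - C (c i) * X) with hN
  have hNdeg : N.natDegree ≤ k := by
    refine le_trans Polynomial.natDegree_mul_le ?_
    have h1 : (1 - C u * X).natDegree ≤ 1 := by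
      refine le_trans (Polynomial.natDegree_sub_le _ _) ?_
      simp only [Polynomial.natDegree_one, max_le_iff, Nat.zero_le, true_and]
      exact (Polynomial.natDegree_C_mul_le _ _).trans (by simp)
    have h2 := natDegree_prod_one_sub_le_aux (Finset.Icc 1 (k - 1)) c
    omega
  have hNdeglt : N.degree < (s.card : WithBot ℕ) := by
    refine lt_of_le_of_lt Polynomial.degree_le_natDegree ?_
    rw [hcard]
    exact_mod_cast Nat.lt_succ_of_le hNdeg
  have hNeval : ∀ j : ℕ,
      N.eval (x j) = (1 - u * x j) * ∏ i ∈ Finset.Icc 1 (k - 1), (1 - x j * c i) := by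
    intro j
    rw [hN]
    simp only [Polynomial.eval_mul, Polynomial.eval_sub, Polynomial.eval_one,
      Polynomial.eval_C, Polynomial.eval_X, Polynomial.eval_prod]
    congr 1
    exact Finset.prod_congr rfl fun i _ => by ring
  have hrw : ∑ j ∈ s, ((1 - u * x j) / (1 - v * x j) *
          ∏ i ∈ Finset.Icc 1 (k - 1), (1 - x j * c i)) / ∏ l ∈ s.erase j, (x j - x l)
      = ∑ j ∈ s, (N.eval (x j) / (1 - v * x j)) / ∏ l ∈ s.erase j, (x j - x l) :=
    Finset.sum_congr rfl fun j _ => by rw [hNeval j]; ring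
  rw [hrw]
  by_cases hv0 : v = 0
  · subst hv0
    simp only [zero_mul, sub_zero, div_one, zero_sub]
    rw [sum_div_prod_eq_coeff_aux s x hinj N hNdeglt, hcard]
    simp only [Nat.add_sub_cancel, Finset.prod_const_one, div_one]
    -- N.coeff k = (-u) * ∏ (-(c i))
    set d : ℕ → K := fun i => if i = 0 then u else c i with hd
    have h0 : (0 : ℕ) ∉ Finset.Icc 1 (k - 1) := by simp
    have hNd : N = ∏ i ∈ insert 0 (Finset.Icc 1 (k - 1)), (1 - C (d i) * X) := by
      rw [Finset.prod_insert h0, hN, show d 0 = u from rfl]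
      refine congrArg _ (Finset.prod_congr rfl fun i hi => ?_)
      have hi0 : i ≠ 0 := by
        have := (Finset.mem_Icc.mp hi).1
        omega
      rw [show d i = c i from if_neg hi0]
    have hcardi : (insert 0 (Finset.Icc 1 (k - 1))).card = k := by
      rw [Finset.card_insert_of_notMem h0, hcard']
      omega
    have hco := coeff_prod_one_sub_aux (insert 0 (Finset.Icc 1 (k - 1))) d
    rw [hcardi] at hco
    rw [hNd, hco, Finset.prod_insert h0, show d 0 = u from rfl]
    refine congrArg _ (Finset.prod_congr rfl fun i hi => ?_)
    have hi0 : i ≠ 0 := by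
      have := (Finset.mem_Icc.mp hi).1
      omega
    rw [show d i = c i from if_neg hi0]
  · -- v ≠ 0
    set r : K := N.eval v⁻¹ with hr
    obtain ⟨Q, hQ⟩ : (X - C v⁻¹) ∣ (N - C r) := by
      rw [Polynomial.dvd_iff_isRoot]
      simp [Polynomial.IsRoot, hr]
    have hQdeg : Q.natDegree < k := by
      by_cases hQ0 : Q = 0
      · simp [hQ0]; omega
      · have hne : (X - C v⁻¹ : K[X]) ≠ 0 := Polynomial.X_sub_C_ne_zero _
        have h1 : (N - C r).natDegree = 1 + Q.natDegree := by
          rw [hQ, Polynomial.natDegree_mul hne hQ0, Polynomial.natDegree_X_sub_C]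
        have h2 : (N - C r).natDegree ≤ k := by
          refine le_trans (Polynomial.natDegree_sub_le _ _) ?_
          simp only [max_le_iff]
          exact ⟨hNdeg, le_trans (Polynomial.natDegree_C _).le (by omega)⟩
        omega
    have hQdeglt : Q.degree < (s.card : WithBot ℕ) := by
      refine lt_of_le_of_lt Polynomial.degree_le_natDegree ?_
      rw [hcard]
      exact_mod_cast by omega
    have key : ∀ j ∈ s, N.eval (x j) / (1 - v * x j)
        = -v⁻¹ * Q.eval (x j) + r * (1 - v * x j)⁻¹ := by
      intro j hj
      have h1 := hv j hj
      have heval : N.eval (x j) = (x j - v⁻¹) * Q.eval (x j) + r := by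
        have h := congrArg (Polynomial.eval (x j)) hQ
        simp only [Polynomial.eval_sub, Polynomial.eval_mul, Polynomial.eval_X,
          Polynomial.eval_C] at h
        linear_combination h
      rw [div_eq_iff h1, heval]
      rw [add_mul, mul_assoc r, inv_mul_cancel₀ h1, mul_one]
      have hvv : v⁻¹ * v = 1 := inv_mul_cancel₀ hv0
      linear_combination (-(x j) * Q.eval (x j)) * hvv
    have hsplit : ∑ j ∈ s, (N.eval (x j) / (1 - v * x j)) / ∏ l ∈ s.erase j, (x j - x l)
        = -v⁻¹ * (∑ j ∈ s, Q.eval (x j) / ∏ l ∈ s.erase j, (x j - x l))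
          + r * ∑ j ∈ s, ((1 - v * x j) * ∏ l ∈ s.erase j, (x j - x l))⁻¹ := by
      rw [Finset.mul_sum, Finset.mul_sum, ← Finset.sum_add_distrib]
      refine Finset.sum_congr rfl fun j hj => ?_
      rw [key j hj, mul_inv]
      ring
    rw [hsplit, sum_div_prod_eq_coeff_aux s x hinj Q hQdeglt,
      sum_inv_one_sub_mul_aux v s (by rw [← Finset.card_pos, hcard]; omega) x hinj hv, hcard]
    simp only [Nat.add_sub_cancel]
    rw [Polynomial.coeff_eq_zero_of_natDegree_lt hQdeg, mul_zero, zero_add]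
    -- r * (v ^ k / ∏) = (v - u) * ∏ (v - c i) / ∏
    rw [mul_div_assoc']
    congr 1
    -- r * v ^ k = (v - u) * ∏ (v - c i)
    have hvk : v ^ k = v * ∏ _i ∈ Finset.Icc 1 (k - 1), v := by
      rw [Finset.prod_const, hcard', ← pow_succ', Nat.sub_add_cancel hk]
    rw [hr, hN]
    simp only [Polynomial.eval_mul, Polynomial.eval_sub, Polynomial.eval_one,
      Polynomial.eval_C, Polynomial.eval_X, Polynomial.eval_prod]
    rw [hvk, show (1 - u * v⁻¹) * (∏ i ∈ Finset.Icc 1 (k - 1), (1 - c i * v⁻¹))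
        * (v * ∏ _i ∈ Finset.Icc 1 (k - 1), v)
        = ((1 - u * v⁻¹) * v) * ∏ i ∈ Finset.Icc 1 (k - 1), ((1 - c i * v⁻¹) * v) from by
      rw [Finset.prod_mul_distrib]; ring]
    congr 1
    · field_simp
    · exact Finset.prod_congr rfl fun i _ => by field_simp
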